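/- Fix τ ∈ ℂ. For a real parameter p > 2, let u(p) = exp(2πi/(3p)), α(p) = 2 − u(p)³ − conj(u(p))³ = 2 − 2cos(2π/p) > 0, β(p) = (conj(u(p))² − u(p))τ, and let H(p) be the 3×3 Hermitian matrix [[α(p), β(p), conj(β(p))], [conj(β(p)), α(p), β(p)], [β(p), conj(β(p)), α(p)]]. Then as p → +∞, the rescaled matrix α(p)^(−1/2) · H(p) converges (entrywise) to the matrix H∞ = [[0, −iτ, i·conj(τ)], [i·conj(τ), 0, −iτ], [−iτ, i·conj(τ), 0]]. -/

import Mathlib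

open Matrix Filter

noncomputable section

/-- u(p) = exp(2πi/(3p)). -/
def uP (p : ℝ) : ℂ := Complex.exp (2 * Real.pi * Complex.I / (3 * p))

/-- α(p) = 2 − 2cos(2π/p), as a real number. -/
def αP (p : ℝ) : ℝ := 2 - 2 * Real.cos (2 * Real.pi / p)

/-- β(p) = (conj(u(p))² − u(p))·τ. -/
def βP (τ : ℂ) (p : ℝ) : ℂ := ((starRingEnd ℂ (uP p)) ^ 2 - uP p) * τ

/-- The Hermitian matrix H(p). -/
def HP (τ : ℂ) (p : ℝ) : Matrix (Fin 3) (Fin 3) ℂ :=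
  !![(αP p : ℂ), βP τ p, starRingEnd ℂ (βP τ p);
     starRingEnd ℂ (βP τ p), (αP p : ℂ), βP τ p;
     βP τ p, starRingEnd ℂ (βP τ p), (αP p : ℂ)]

/-- The limiting Hermitian form H∞. -/
def Hinf (τ : ℂ) : Matrix (Fin 3) (Fin 3) ℂ :=
  !![0, -Complex.I * τ, Complex.I * starRingEnd ℂ τ;
     Complex.I * starRingEnd ℂ τ, 0, -Complex.I * τ;
     -Complex.I * τ, Complex.I * starRingEnd ℂ τ, 0]

lemma alpha_pos {p : ℝ} (hp : 2 < p) : 0 < αP p := by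
  have hπ := Real.pi_pos
  have hp0 : 0 < p := by linarith
  have h1 : 0 < 2 * Real.pi / p := by positivity
  have h2 : 2 * Real.pi / p ≤ Real.pi := by
    rw [div_le_iff₀ hp0]; nlinarith
  have := Real.cos_lt_cos_of_nonneg_of_le_pi le_rfl h2 h1
  rw [Real.cos_zero] at this
  unfold αP; linarith

lemma part1_eq {p : ℝ} (hp : 2 < p) :
    2 - uP p ^ 3 - (starRingEnd ℂ (uP p)) ^ 3 = (αP p : ℂ) := by
  have hp0 : (p : ℂ) ≠ 0 := by
    exact_mod_cast (by linarith : p ≠ 0)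
  have h3 : uP p ^ 3 = Complex.exp (((2 * Real.pi / p : ℝ) : ℂ) * Complex.I) := by
    rw [uP, ← Complex.exp_nat_mul]
    congr 1
    push_cast
    field_simp
  have h3' : (starRingEnd ℂ (uP p)) ^ 3
      = Complex.exp ((-(2 * Real.pi / p : ℝ) : ℂ) * Complex.I) := by
    rw [← map_pow, h3, ← Complex.exp_conj]
    congr 1
    simp [_root_.map_mul, map_div₀, map_ofNat, Complex.conj_I, Complex.conj_ofReal]
  rw [h3, h3', Complex.exp_mul_I, Complex.exp_mul_I, αP]
  rw [Complex.cos_neg, Complex.sin_neg, ← Complex.ofReal_cos, ← Complex.ofReal_sin]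
  push_cast
  ring


def θf (p : ℝ) : ℝ := 2 * Real.pi / (3 * p)
def hf (t : ℝ) : ℂ := Complex.exp (-2 * Complex.I * t) - Complex.exp (Complex.I * t)

lemma hf0 : hf 0 = 0 := by simp [hf]

lemma hf_deriv : HasDerivAt hf (-3 * Complex.I) 0 := by
  have h1 : HasDerivAt (fun t : ℝ => Complex.exp (-2 * Complex.I * t)) (-2 * Complex.I) 0 := by
    have := (((hasDerivAt_id (0:ℂ)).const_mul (-2 * Complex.I)).cexp).comp_ofReal (z := 0)
    simpa using this
  have h2 : HasDerivAt (fun t : ℝ => Complex.exp (Complex.I * t)) (Complex.I) 0 := by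
    have := (((hasDerivAt_id (0:ℂ)).const_mul Complex.I).cexp).comp_ofReal (z := 0)
    simpa using this
  have := h1.sub h2
  rw [show (-3 * Complex.I) = -2 * Complex.I - Complex.I by ring]
  exact this

lemma sf_deriv : HasDerivAt (fun t : ℝ => Real.sin (3 * t / 2)) (3/2) 0 := by
  have h1 : HasDerivAt (fun t : ℝ => 3 * t / 2) (3/2) 0 := by
    simpa using ((hasDerivAt_id (0:ℝ)).const_mul 3).div_const 2
  have := (Real.hasDerivAt_sin (3 * 0 / 2)).comp 0 h1
  simpa [Function.comp_def] using this

lemma theta_tendsto : Tendsto θf atTop (nhds 0) := by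
  apply Tendsto.div_atTop (tendsto_const_nhds)
  exact (tendsto_id.const_mul_atTop (by norm_num : (0:ℝ) < 3))

lemma theta_tendsto' : Tendsto θf atTop (nhdsWithin 0 {(0:ℝ)}ᶜ) := by
  apply tendsto_nhdsWithin_of_tendsto_nhds_of_eventually_within _ theta_tendsto
  filter_upwards [eventually_gt_atTop (0:ℝ)] with p hp
  have : 0 < θf p := by have := Real.pi_pos; unfold θf; positivity
  simp [this.ne']

lemma A_tendsto : Tendsto (fun p => (θf p)⁻¹ • hf (θf p)) atTop (nhds (-3 * Complex.I)) := by
  have := (hasDerivAt_iff_tendsto_slope.mp hf_deriv).comp theta_tendsto'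
  apply this.congr
  intro p
  simp [Function.comp, slope_def_module, hf0]

lemma B_tendsto : Tendsto (fun p => (θf p)⁻¹ * Real.sin (3 * θf p / 2)) atTop (nhds (3/2)) := by
  have := (hasDerivAt_iff_tendsto_slope.mp sf_deriv).comp theta_tendsto'
  apply this.congr
  intro p
  simp [Function.comp, slope_def_field]
  ring

lemma alpha_tendsto : Tendsto αP atTop (nhds 0) := by
  have hx : Tendsto (fun p : ℝ => 2 * Real.pi / p) atTop (nhds 0) :=
    Tendsto.div_atTop tendsto_const_nhds tendsto_id
  have hcos : Tendsto (fun p : ℝ => Real.cos (2 * Real.pi / p)) atTop (nhds 1) := by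
    have := (Real.continuous_cos.tendsto 0).comp hx
    simpa [Function.comp_def] using this
  have h : Tendsto (fun p : ℝ => 2 - 2 * Real.cos (2 * Real.pi / p)) atTop (nhds (2 - 2 * 1)) :=
    tendsto_const_nhds.sub (hcos.const_mul 2)
  have h2 : (2:ℝ) - 2 * 1 = 0 := by norm_num
  rw [h2] at h
  exact h

lemma sqrt_alpha {p : ℝ} (hp : 2 < p) :
    Real.sqrt (αP p) = 2 * Real.sin (3 * θf p / 2) := by
  have hπ := Real.pi_pos
  have hp0 : 0 < p := by linarith
  have h1 : 3 * θf p / 2 = Real.pi / p := by unfold θf; field_simp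
  rw [h1]
  have hx0 : 0 ≤ 2 * Real.pi / p := by positivity
  have hx2 : 2 * Real.pi / p ≤ 2 * Real.pi := by
    apply div_le_self (by positivity) (by linarith)
  have hs := Real.sin_half_eq_sqrt hx0 hx2
  have h2 : (2 * Real.pi / p) / 2 = Real.pi / p := by ring
  rw [h2] at hs
  rw [hs, αP]
  rw [show 2 - 2 * Real.cos (2 * Real.pi / p) = 4 * ((1 - Real.cos (2 * Real.pi / p)) / 2) by ring]
  rw [Real.sqrt_mul (by norm_num), show (4:ℝ) = 2 ^ 2 by norm_num, Real.sqrt_sq (by norm_num)]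

lemma beta_eq (τ : ℂ) (p : ℝ) : βP τ p = hf (θf p) * τ := by
  have hu : uP p = Complex.exp (Complex.I * ((θf p : ℝ) : ℂ)) := by
    unfold uP θf; congr 1; push_cast; ring
  have hc : (starRingEnd ℂ) (uP p) ^ 2 = Complex.exp (-2 * Complex.I * ((θf p : ℝ) : ℂ)) := by
    rw [hu, ← Complex.exp_conj, ← Complex.exp_nat_mul]
    congr 1
    simp [_root_.map_mul, Complex.conj_I, Complex.conj_ofReal]
    push_cast
    ring
  unfold βP hf
  rw [hc, hu]

lemma E_tendsto (τ : ℂ) :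
    Tendsto (fun p : ℝ => (((Real.sqrt (αP p))⁻¹ : ℝ) : ℂ) * βP τ p) atTop
      (nhds (-Complex.I * τ)) := by
  have hB2 : Tendsto (fun p => ((2 * ((θf p)⁻¹ * Real.sin (3 * θf p / 2)))⁻¹ : ℝ)) atTop
      (nhds ((3:ℝ)⁻¹)) := by
    have := (B_tendsto.const_mul 2).inv₀ (by norm_num)
    convert this using 2
    norm_num
  have hBc : Tendsto (fun p => (((2 * ((θf p)⁻¹ * Real.sin (3 * θf p / 2)))⁻¹ : ℝ) : ℂ)) atTop
      (nhds (((3:ℝ)⁻¹ : ℝ) : ℂ)) := (Complex.continuous_ofReal.tendsto _).comp hB2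
  have hmain := (A_tendsto.mul_const τ).mul hBc
  have hlim : (-3 * Complex.I) * τ * (((3:ℝ)⁻¹ : ℝ) : ℂ) = -Complex.I * τ := by
    push_cast; ring
  rw [hlim] at hmain
  apply hmain.congr'
  filter_upwards [eventually_gt_atTop (2:ℝ)] with p hp
  have hπ := Real.pi_pos
  have hp0 : 0 < p := by linarith
  have hθpos : 0 < θf p := by unfold θf; positivity
  have hspos : 0 < Real.sin (3 * θf p / 2) := by
    have h1 : 3 * θf p / 2 = Real.pi / p := by unfold θf; field_simp
    rw [h1]
    exact Real.sin_pos_of_pos_of_lt_pi (by positivity)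
      (by rw [div_lt_iff₀ hp0]; nlinarith)
  rw [sqrt_alpha hp, beta_eq]
  have hθ : ((θf p : ℝ) : ℂ) ≠ 0 := by exact_mod_cast hθpos.ne'
  have hs : ((Real.sin (3 * θf p / 2) : ℝ) : ℂ) ≠ 0 := by exact_mod_cast hspos.ne'
  rw [Complex.real_smul]
  push_cast
  field_simp

lemma D_tendsto : Tendsto (fun p : ℝ => (((Real.sqrt (αP p))⁻¹ : ℝ) : ℂ) * ((αP p : ℝ) : ℂ))
    atTop (nhds 0) := by
  have hsq : Tendsto (fun p => Real.sqrt (αP p)) atTop (nhds 0) := by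
    have := (Real.continuous_sqrt.tendsto 0).comp alpha_tendsto
    simpa [Function.comp_def] using this
  have h1 : Tendsto (fun p => ((Real.sqrt (αP p) : ℝ) : ℂ)) atTop (nhds 0) := by
    have := (Complex.continuous_ofReal.tendsto 0).comp hsq
    simpa [Function.comp_def] using this
  apply h1.congr'
  filter_upwards [eventually_gt_atTop (2:ℝ)] with p hp
  have hα := alpha_pos hp
  have hne : Real.sqrt (αP p) ≠ 0 := (Real.sqrt_pos.mpr hα).ne'
  rw [← Complex.ofReal_mul]
  congr 1
  rw [eq_comm, inv_mul_eq_iff_eq_mul₀ hne, Real.mul_self_sqrt hα.le]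

lemma C_tendsto (τ : ℂ) :
    Tendsto (fun p : ℝ => (((Real.sqrt (αP p))⁻¹ : ℝ) : ℂ) * (starRingEnd ℂ) (βP τ p)) atTop
      (nhds (Complex.I * (starRingEnd ℂ) τ)) := by
  have h := ((Complex.continuous_conj).tendsto (-Complex.I * τ)).comp (E_tendsto τ)
  have h2 : (starRingEnd ℂ) (-Complex.I * τ) = Complex.I * (starRingEnd ℂ) τ := by
    simp [_root_.map_mul, Complex.conj_I]
  rw [h2] at h
  apply h.congr
  intro p
  simp [Function.comp, _root_.map_mul, Complex.conj_ofReal]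

/-- for p > 2 one has 2 − u(p)³ − conj(u(p))³ = 2 − 2cos(2π/p) > 0, and
α(p)^(−1/2)·H(p) converges entrywise to H∞ as p → +∞. -/
theorem stmt_4 (τ : ℂ) :
    (∀ p : ℝ, 2 < p →
      (2 - uP p ^ 3 - (starRingEnd ℂ (uP p)) ^ 3 = (αP p : ℂ)) ∧ 0 < αP p) ∧
    Tendsto (fun p : ℝ => (((Real.sqrt (αP p))⁻¹ : ℝ) : ℂ) • HP τ p)
      atTop (nhds (Hinf τ)) := by
  constructor
  · intro p hp
    exact ⟨part1_eq hp, alpha_pos hp⟩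
  · refine tendsto_pi_nhds.mpr ?_
    intro i
    rw [tendsto_pi_nhds]
    intro j
    fin_cases i <;> fin_cases j <;>
      simp only [HP, Hinf, Matrix.smul_apply, smul_eq_mul, Matrix.cons_val', Matrix.cons_val_zero,
        Matrix.cons_val_one, Matrix.head_cons, Matrix.empty_val', Matrix.cons_val_fin_one,
        Matrix.head_fin_const] <;>
      first
        | exact D_tendsto
        | exact E_tendsto τ
        | exact C_tendsto τ


end
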